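/- For a consistently connected cyclic system of rank 2 (the Bell/CHSH-type system) of ±1-valued random variables, the system is noncontextual if and only if the CHSH inequality holds: max over the four sign choices with an odd number of minus signs of |±E[A_1 B_1] ± E[A_1 B_2] ± E[A_2 B_1] ± E[A_2 B_2]| ≤ 2, where the expectations are taken within the respective contexts. -/

import Mathlib

open Finset
open scoped Classical

/-- A probability distribution on a finite type. -/
def IsDist {α : Type*} [Fintype α] (p : α → ℝ) : Prop :=
  (∀ a, 0 ≤ p a) ∧ ∑ a, p a = 1

/-- The value `±1` encoded by a `Bool`. -/
def sgn (b : Bool) : ℝ := if b then 1 else -1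

theorem sum_pi_bool (g : (Fin 2 → Bool) → ℝ) :
    ∑ f, g f = g ![true,true] + g ![true,false] + g ![false,true] + g ![false,false] := by
  have hc : ∀ x y : Bool, (Fin.cons x (Fin.cons y finZeroElim) : Fin 2 → Bool) = ![x,y] := by
    intro x y; funext i; fin_cases i <;> rfl
  rw [← Equiv.sum_comp (piFinTwoEquiv fun _ => Bool).symm g]
  rw [Fintype.sum_prod_type]
  simp [Fintype.sum_bool, piFinTwoEquiv, hc]
  ring

noncomputable def tauF (a b1 b2 c1 c2 s u : ℝ) (α β1 β2 : Bool) : ℝ :=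
  (1 + sgn α * a + sgn β1 * b1 + sgn β2 * b2 + sgn α * sgn β1 * c1 + sgn α * sgn β2 * c2
    + sgn β1 * sgn β2 * s + sgn α * sgn β1 * sgn β2 * u) / 8

noncomputable def uF (a b1 b2 c1 c2 s : ℝ) : ℝ :=
  max (max (-(1 + a + b1 + b2 + c1 + c2 + s)) (-(1 + a - b1 - b2 - c1 - c2 + s)))
      (max (-(1 - a + b1 - b2 - c1 + c2 - s)) (-(1 - a - b1 + b2 + c1 - c2 - s)))

theorem tauF_sum_a (a b1 b2 c1 c2 s u : ℝ) (β1 β2 : Bool) :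
    tauF a b1 b2 c1 c2 s u true β1 β2 + tauF a b1 b2 c1 c2 s u false β1 β2
      = (1 + sgn β1 * b1 + sgn β2 * b2 + sgn β1 * sgn β2 * s) / 4 := by
  cases β1 <;> cases β2 <;> simp [tauF, sgn] <;> ring

theorem tauF_sum_b2 (a b1 b2 c1 c2 s u : ℝ) (α β1 : Bool) :
    tauF a b1 b2 c1 c2 s u α β1 true + tauF a b1 b2 c1 c2 s u α β1 false
      = (1 + sgn α * a + sgn β1 * b1 + sgn α * sgn β1 * c1) / 4 := by
  cases α <;> cases β1 <;> simp [tauF, sgn] <;> ring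

theorem tauF_sum_b1 (a b1 b2 c1 c2 s u : ℝ) (α β2 : Bool) :
    tauF a b1 b2 c1 c2 s u α true β2 + tauF a b1 b2 c1 c2 s u α false β2
      = (1 + sgn α * a + sgn β2 * b2 + sgn α * sgn β2 * c2) / 4 := by
  cases α <;> cases β2 <;> simp [tauF, sgn] <;> ring

theorem tauF_nonneg (a b1 b2 c1 c2 s : ℝ)
    (hs1 : 0 ≤ 1 + s + c1 + c2) (hs2 : 0 ≤ 1 + s - c1 - c2)
    (hs3 : 0 ≤ 1 - s + c1 - c2) (hs4 : 0 ≤ 1 - s - c1 + c2)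
    (hb1 : 0 ≤ 1 + s + b1 + b2) (hb2 : 0 ≤ 1 + s - b1 - b2)
    (hb3 : 0 ≤ 1 - s + b1 - b2) (hb4 : 0 ≤ 1 - s - b1 + b2)
    (hm1 : 0 ≤ 1 + a + b1 + c1) (hm2 : 0 ≤ 1 + a - b1 - c1)
    (hm3 : 0 ≤ 1 - a + b1 - c1) (hm4 : 0 ≤ 1 - a - b1 + c1)
    (hn1 : 0 ≤ 1 + a + b2 + c2) (hn2 : 0 ≤ 1 + a - b2 - c2)
    (hn3 : 0 ≤ 1 - a + b2 - c2) (hn4 : 0 ≤ 1 - a - b2 + c2) :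
    ∀ α β1 β2, 0 ≤ tauF a b1 b2 c1 c2 s (uF a b1 b2 c1 c2 s) α β1 β2 := by
  set u := uF a b1 b2 c1 c2 s with hu
  have hu1 : -(1 + a + b1 + b2 + c1 + c2 + s) ≤ u :=
    le_trans (le_max_left _ _) (le_max_left _ _)
  have hu2 : -(1 + a - b1 - b2 - c1 - c2 + s) ≤ u :=
    le_trans (le_max_right _ _) (le_max_left _ _)
  have hu3 : -(1 - a + b1 - b2 - c1 + c2 - s) ≤ u :=
    le_trans (le_max_left _ _) (le_max_right _ _)
  have hu4 : -(1 - a - b1 + b2 + c1 - c2 - s) ≤ u :=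
    le_trans (le_max_right _ _) (le_max_right _ _)
  have hub : ∀ r : ℝ, -(1 + a + b1 + b2 + c1 + c2 + s) ≤ r →
      -(1 + a - b1 - b2 - c1 - c2 + s) ≤ r →
      -(1 - a + b1 - b2 - c1 + c2 - s) ≤ r →
      -(1 - a - b1 + b2 + c1 - c2 - s) ≤ r → u ≤ r := by
    intro r h1 h2 h3 h4
    rw [hu, uF]
    exact max_le (max_le h1 h2) (max_le h3 h4)
  intro α β1 β2
  cases α <;> cases β1 <;> cases β2 <;>
    simp only [tauF, sgn, if_true, if_false, Bool.false_eq_true, ite_true, ite_false] <;>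
    apply div_nonneg _ (by norm_num : (0:ℝ) ≤ 8)
  · linarith [hub (1 - a - b1 - b2 + c1 + c2 + s) (by linarith) (by linarith) (by linarith) (by linarith)]
  · linarith [hu4]
  · linarith [hu3]
  · linarith [hub (1 - a + b1 + b2 - c1 - c2 + s) (by linarith) (by linarith) (by linarith) (by linarith)]
  · linarith [hu2]
  · linarith [hub (1 + a - b1 + b2 - c1 + c2 - s) (by linarith) (by linarith) (by linarith) (by linarith)]
  · linarith [hub (1 + a + b1 - b2 + c1 - c2 - s) (by linarith) (by linarith) (by linarith) (by linarith)]
  · linarith [hu1]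

noncomputable def glue (T1 T2 : Bool → Bool → Bool → ℝ) (x y z w : Bool) : ℝ :=
  if T1 true z w + T1 false z w = 0 then 0
  else T1 x z w * T2 y z w / (T1 true z w + T1 false z w)

theorem glue_nonneg (T1 T2 : Bool → Bool → Bool → ℝ)
    (hT1 : ∀ x z w, 0 ≤ T1 x z w) (hT2 : ∀ x z w, 0 ≤ T2 x z w) (x y z w : Bool) :
    0 ≤ glue T1 T2 x y z w := by
  unfold glue; split_ifs with h
  · exact le_refl 0
  · exact div_nonneg (mul_nonneg (hT1 _ _ _) (hT2 _ _ _)) (add_nonneg (hT1 _ _ _) (hT1 _ _ _))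

theorem glue_sum_y (T1 T2 : Bool → Bool → Bool → ℝ)
    (hT1 : ∀ x z w, 0 ≤ T1 x z w)
    (hsame : ∀ z w, T1 true z w + T1 false z w = T2 true z w + T2 false z w)
    (x z w : Bool) :
    glue T1 T2 x true z w + glue T1 T2 x false z w = T1 x z w := by
  by_cases h : T1 true z w + T1 false z w = 0
  · simp only [glue, if_pos h]
    have h1 := hT1 true z w; have h2 := hT1 false z w
    cases x <;> [linarith; linarith]
  · simp only [glue, if_neg h]
    rw [← add_div, ← mul_add, hsame z w, mul_div_assoc, div_self (by rw [hsame z w] at h; exact h), mul_one]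

theorem glue_sum_x (T1 T2 : Bool → Bool → Bool → ℝ)
    (hT2 : ∀ x z w, 0 ≤ T2 x z w)
    (hsame : ∀ z w, T1 true z w + T1 false z w = T2 true z w + T2 false z w)
    (y z w : Bool) :
    glue T1 T2 true y z w + glue T1 T2 false y z w = T2 y z w := by
  by_cases h : T1 true z w + T1 false z w = 0
  · simp only [glue, if_pos h]
    have h0 := hsame z w
    have h1 := hT2 true z w; have h2 := hT2 false z w
    cases y <;> [linarith; linarith]
  · simp only [glue, if_neg h]
    rw [← add_div, ← add_mul, mul_comm, mul_div_assoc, div_self h, mul_one]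

set_option maxHeartbeats 4000000 in
/-- A consistently connected cyclic rank-2 (CHSH-type) system of `±1`-valued variables is
noncontextual iff the CHSH inequality holds for all odd-sign combinations. Here `μ i j` is
the joint distribution of `(A i, B j)` in context `(i, j)` (with `true ↦ +1`, `false ↦ -1`). -/
theorem stmt8 (μ : Fin 2 → Fin 2 → (Bool × Bool → ℝ))
    (hdist : ∀ i j, IsDist (μ i j))
    (hccA : ∀ i a, ∑ b, μ i 0 (a, b) = ∑ b, μ i 1 (a, b))
    (hccB : ∀ j b, ∑ a, μ 0 j (a, b) = ∑ a, μ 1 j (a, b)) :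
    (∃ ν : (Fin 2 → Bool) × (Fin 2 → Bool) → ℝ, IsDist ν ∧
        ∀ i j a b,
          ∑ v ∈ Finset.univ.filter
              (fun v : (Fin 2 → Bool) × (Fin 2 → Bool) => v.1 i = a ∧ v.2 j = b), ν v
            = μ i j (a, b))
    ↔ ∀ s : Fin 2 → Fin 2 → ℝ, (∀ i j, s i j = 1 ∨ s i j = -1) →
        s 0 0 * s 0 1 * s 1 0 * s 1 1 = -1 →
        (∑ i, ∑ j, s i j * ∑ a, ∑ b, sgn a * sgn b * μ i j (a, b)) ≤ 2 := by
  constructor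
  · intro hex
    obtain ⟨ν, ⟨hnn, hsum⟩, hm⟩ := hex
    intro s hs hodd
    have hμν : ∀ (i j : Fin 2) (x y : Bool), μ i j (x,y)
        = ∑ p : Fin 2 → Bool, ∑ q : Fin 2 → Bool, if p i = x ∧ q j = y then ν (p,q) else 0 := by
      intro i j x y
      rw [← hm i j x y, Finset.sum_filter, Fintype.sum_prod_type]
    rw [Fintype.sum_prod_type] at hsum
    simp only [sum_pi_bool] at hsum
    have k1 := hnn (![true,true],![true,true])
    have k2 := hnn (![true,true],![true,false])
    have k3 := hnn (![true,true],![false,true])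
    have k4 := hnn (![true,true],![false,false])
    have k5 := hnn (![true,false],![true,true])
    have k6 := hnn (![true,false],![true,false])
    have k7 := hnn (![true,false],![false,true])
    have k8 := hnn (![true,false],![false,false])
    have k9 := hnn (![false,true],![true,true])
    have k10 := hnn (![false,true],![true,false])
    have k11 := hnn (![false,true],![false,true])
    have k12 := hnn (![false,true],![false,false])
    have k13 := hnn (![false,false],![true,true])
    have k14 := hnn (![false,false],![true,false])
    have k15 := hnn (![false,false],![false,true])
    have k16 := hnn (![false,false],![false,false])
    simp only [Fin.sum_univ_two]
    simp only [hμν, sum_pi_bool, Fintype.sum_bool, sgn]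
    simp only [Matrix.cons_val_zero, Matrix.cons_val_one, Matrix.head_cons]
    norm_num
    rcases hs 0 0 with h1|h1 <;> rcases hs 0 1 with h2|h2 <;> rcases hs 1 0 with h3|h3 <;>
      rcases hs 1 1 with h4|h4 <;> rw [h1,h2,h3,h4] at hodd ⊢ <;>
      first
        | (norm_num at hodd; linarith)
        | linarith
  · intro hC
    have hpos : ∀ (i j : Fin 2) (x y : Bool), 0 ≤ μ i j (x,y) := fun i j x y => (hdist i j).1 (x,y)
    have hd : ∀ i j : Fin 2, μ i j (true,true) + μ i j (true,false) + μ i j (false,true)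
        + μ i j (false,false) = 1 := by
      intro i j
      have h := (hdist i j).2
      simp [Fintype.sum_prod_type, Fintype.sum_bool] at h
      linarith
    have hA : ∀ (i : Fin 2) (x : Bool), μ i 0 (x,true) + μ i 0 (x,false)
        = μ i 1 (x,true) + μ i 1 (x,false) := by
      intro i x; simpa [Fintype.sum_bool] using hccA i x
    have hB : ∀ (j : Fin 2) (y : Bool), μ 0 j (true,y) + μ 0 j (false,y)
        = μ 1 j (true,y) + μ 1 j (false,y) := by
      intro j y; simpa [Fintype.sum_bool] using hccB j y
    have hd00 := hd 0 0; have hd01 := hd 0 1; have hd10 := hd 1 0; have hd11 := hd 1 1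
    have hA0t := hA 0 true; have hA0f := hA 0 false; have hA1t := hA 1 true; have hA1f := hA 1 false
    have hB0t := hB 0 true; have hB0f := hB 0 false; have hB1t := hB 1 true; have hB1f := hB 1 false
    obtain ⟨a0, ha0⟩ : ∃ x : ℝ, x = μ 0 0 (true,true) + μ 0 0 (true,false) - μ 0 0 (false,true) - μ 0 0 (false,false) := ⟨_, rfl⟩
    obtain ⟨a1, ha1⟩ : ∃ x : ℝ, x = μ 1 0 (true,true) + μ 1 0 (true,false) - μ 1 0 (false,true) - μ 1 0 (false,false) := ⟨_, rfl⟩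
    obtain ⟨b0, hb0⟩ : ∃ x : ℝ, x = μ 0 0 (true,true) - μ 0 0 (true,false) + μ 0 0 (false,true) - μ 0 0 (false,false) := ⟨_, rfl⟩
    obtain ⟨b1, hb1⟩ : ∃ x : ℝ, x = μ 0 1 (true,true) - μ 0 1 (true,false) + μ 0 1 (false,true) - μ 0 1 (false,false) := ⟨_, rfl⟩
    obtain ⟨c00, hc00⟩ : ∃ x : ℝ, x = μ 0 0 (true,true) - μ 0 0 (true,false) - μ 0 0 (false,true) + μ 0 0 (false,false) := ⟨_, rfl⟩
    obtain ⟨c01, hc01⟩ : ∃ x : ℝ, x = μ 0 1 (true,true) - μ 0 1 (true,false) - μ 0 1 (false,true) + μ 0 1 (false,false) := ⟨_, rfl⟩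
    obtain ⟨c10, hc10⟩ : ∃ x : ℝ, x = μ 1 0 (true,true) - μ 1 0 (true,false) - μ 1 0 (false,true) + μ 1 0 (false,false) := ⟨_, rfl⟩
    obtain ⟨c11, hc11⟩ : ∃ x : ℝ, x = μ 1 1 (true,true) - μ 1 1 (true,false) - μ 1 1 (false,true) + μ 1 1 (false,false) := ⟨_, rfl⟩
    have h00 : ∀ x y : Bool, 4 * μ 0 0 (x,y) = 1 + sgn x * a0 + sgn y * b0 + sgn x * sgn y * c00 := by
      intro x y; cases x <;> cases y <;> simp [sgn] <;> linarith
    have h01 : ∀ x y : Bool, 4 * μ 0 1 (x,y) = 1 + sgn x * a0 + sgn y * b1 + sgn x * sgn y * c01 := by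
      intro x y; cases x <;> cases y <;> simp [sgn] <;> linarith
    have h10 : ∀ x y : Bool, 4 * μ 1 0 (x,y) = 1 + sgn x * a1 + sgn y * b0 + sgn x * sgn y * c10 := by
      intro x y; cases x <;> cases y <;> simp [sgn] <;> linarith
    have h11 : ∀ x y : Bool, 4 * μ 1 1 (x,y) = 1 + sgn x * a1 + sgn y * b1 + sgn x * sgn y * c11 := by
      intro x y; cases x <;> cases y <;> simp [sgn] <;> linarith
    have p001 : 0 ≤ 1 + a0 + b0 + c00 := by have h := h00 true true; simp [sgn] at h; linarith [hpos 0 0 true true]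
    have p002 : 0 ≤ 1 + a0 - b0 - c00 := by have h := h00 true false; simp [sgn] at h; linarith [hpos 0 0 true false]
    have p003 : 0 ≤ 1 - a0 + b0 - c00 := by have h := h00 false true; simp [sgn] at h; linarith [hpos 0 0 false true]
    have p004 : 0 ≤ 1 - a0 - b0 + c00 := by have h := h00 false false; simp [sgn] at h; linarith [hpos 0 0 false false]
    have p011 : 0 ≤ 1 + a0 + b1 + c01 := by have h := h01 true true; simp [sgn] at h; linarith [hpos 0 1 true true]
    have p012 : 0 ≤ 1 + a0 - b1 - c01 := by have h := h01 true false; simp [sgn] at h; linarith [hpos 0 1 true false]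
    have p013 : 0 ≤ 1 - a0 + b1 - c01 := by have h := h01 false true; simp [sgn] at h; linarith [hpos 0 1 false true]
    have p014 : 0 ≤ 1 - a0 - b1 + c01 := by have h := h01 false false; simp [sgn] at h; linarith [hpos 0 1 false false]
    have p101 : 0 ≤ 1 + a1 + b0 + c10 := by have h := h10 true true; simp [sgn] at h; linarith [hpos 1 0 true true]
    have p102 : 0 ≤ 1 + a1 - b0 - c10 := by have h := h10 true false; simp [sgn] at h; linarith [hpos 1 0 true false]
    have p103 : 0 ≤ 1 - a1 + b0 - c10 := by have h := h10 false true; simp [sgn] at h; linarith [hpos 1 0 false true]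
    have p104 : 0 ≤ 1 - a1 - b0 + c10 := by have h := h10 false false; simp [sgn] at h; linarith [hpos 1 0 false false]
    have p111 : 0 ≤ 1 + a1 + b1 + c11 := by have h := h11 true true; simp [sgn] at h; linarith [hpos 1 1 true true]
    have p112 : 0 ≤ 1 + a1 - b1 - c11 := by have h := h11 true false; simp [sgn] at h; linarith [hpos 1 1 true false]
    have p113 : 0 ≤ 1 - a1 + b1 - c11 := by have h := h11 false true; simp [sgn] at h; linarith [hpos 1 1 false true]
    have p114 : 0 ≤ 1 - a1 - b1 + c11 := by have h := h11 false false; simp [sgn] at h; linarith [hpos 1 1 false false]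
    have ch1 : c00 + c01 + c10 - c11 ≤ 2 := by
      have h := hC ![![1,1],![1,-1]] (by intro i j; fin_cases i <;> fin_cases j <;> norm_num) (by norm_num)
      simp [Fin.sum_univ_two, Fintype.sum_bool, sgn] at h; linarith
    have ch2 : c00 + c01 - c10 + c11 ≤ 2 := by
      have h := hC ![![1,1],![-1,1]] (by intro i j; fin_cases i <;> fin_cases j <;> norm_num) (by norm_num)
      simp [Fin.sum_univ_two, Fintype.sum_bool, sgn] at h; linarith
    have ch3 : c00 - c01 + c10 + c11 ≤ 2 := by
      have h := hC ![![1,-1],![1,1]] (by intro i j; fin_cases i <;> fin_cases j <;> norm_num) (by norm_num)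
      simp [Fin.sum_univ_two, Fintype.sum_bool, sgn] at h; linarith
    have ch4 : -c00 + c01 + c10 + c11 ≤ 2 := by
      have h := hC ![![-1,1],![1,1]] (by intro i j; fin_cases i <;> fin_cases j <;> norm_num) (by norm_num)
      simp [Fin.sum_univ_two, Fintype.sum_bool, sgn] at h; linarith
    have ch5 : c00 - c01 - c10 - c11 ≤ 2 := by
      have h := hC ![![1,-1],![-1,-1]] (by intro i j; fin_cases i <;> fin_cases j <;> norm_num) (by norm_num)
      simp [Fin.sum_univ_two, Fintype.sum_bool, sgn] at h; linarith
    have ch6 : -c00 + c01 - c10 - c11 ≤ 2 := by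
      have h := hC ![![-1,1],![-1,-1]] (by intro i j; fin_cases i <;> fin_cases j <;> norm_num) (by norm_num)
      simp [Fin.sum_univ_two, Fintype.sum_bool, sgn] at h; linarith
    have ch7 : -c00 - c01 + c10 - c11 ≤ 2 := by
      have h := hC ![![-1,-1],![1,-1]] (by intro i j; fin_cases i <;> fin_cases j <;> norm_num) (by norm_num)
      simp [Fin.sum_univ_two, Fintype.sum_bool, sgn] at h; linarith
    have ch8 : -c00 - c01 - c10 + c11 ≤ 2 := by
      have h := hC ![![-1,-1],![-1,1]] (by intro i j; fin_cases i <;> fin_cases j <;> norm_num) (by norm_num)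
      simp [Fin.sum_univ_two, Fintype.sum_bool, sgn] at h; linarith
    obtain ⟨s0, hs0def⟩ : ∃ x : ℝ, x = max (max (|b0 + b1|) (|c00 + c01|)) (|c10 + c11|) - 1 := ⟨_, rfl⟩
    have lb1 : |b0 + b1| - 1 ≤ s0 := by
      have := le_trans (le_max_left (|b0 + b1|) (|c00 + c01|)) (le_max_left _ (|c10 + c11|)); linarith
    have lb2 : |c00 + c01| - 1 ≤ s0 := by
      have := le_trans (le_max_right (|b0 + b1|) (|c00 + c01|)) (le_max_left _ (|c10 + c11|)); linarith
    have lb3 : |c10 + c11| - 1 ≤ s0 := by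
      have := le_max_right (max (|b0 + b1|) (|c00 + c01|)) (|c10 + c11|); linarith
    have ubnd : ∀ r : ℝ, |b0 + b1| ≤ r + 1 → |c00 + c01| ≤ r + 1 → |c10 + c11| ≤ r + 1 → s0 ≤ r := by
      intro r h1 h2 h3
      have := max_le (max_le h1 h2) h3; linarith
    have habs1 := le_abs_self (b0 + b1); have habs1' := neg_abs_le (b0 + b1)
    have habs2 := le_abs_self (c00 + c01); have habs2' := neg_abs_le (c00 + c01)
    have habs3 := le_abs_self (c10 + c11); have habs3' := neg_abs_le (c10 + c11)
    have qb1 : 0 ≤ 1 + s0 + b0 + b1 := by linarith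
    have qb2 : 0 ≤ 1 + s0 - b0 - b1 := by linarith
    have qb3 : 0 ≤ 1 - s0 + b0 - b1 := by
      have := ubnd (1 + b0 - b1) (abs_le.mpr ⟨by linarith, by linarith⟩)
        (abs_le.mpr ⟨by linarith, by linarith⟩) (abs_le.mpr ⟨by linarith, by linarith⟩)
      linarith
    have qb4 : 0 ≤ 1 - s0 - b0 + b1 := by
      have := ubnd (1 - b0 + b1) (abs_le.mpr ⟨by linarith, by linarith⟩)
        (abs_le.mpr ⟨by linarith, by linarith⟩) (abs_le.mpr ⟨by linarith, by linarith⟩)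
      linarith
    have qs1 : 0 ≤ 1 + s0 + c00 + c01 := by linarith
    have qs2 : 0 ≤ 1 + s0 - c00 - c01 := by linarith
    have qs3 : 0 ≤ 1 - s0 + c00 - c01 := by
      have := ubnd (1 + c00 - c01) (abs_le.mpr ⟨by linarith, by linarith⟩)
        (abs_le.mpr ⟨by linarith, by linarith⟩) (abs_le.mpr ⟨by linarith, by linarith⟩)
      linarith
    have qs4 : 0 ≤ 1 - s0 - c00 + c01 := by
      have := ubnd (1 - c00 + c01) (abs_le.mpr ⟨by linarith, by linarith⟩)
        (abs_le.mpr ⟨by linarith, by linarith⟩) (abs_le.mpr ⟨by linarith, by linarith⟩)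
      linarith
    have qt1 : 0 ≤ 1 + s0 + c10 + c11 := by linarith
    have qt2 : 0 ≤ 1 + s0 - c10 - c11 := by linarith
    have qt3 : 0 ≤ 1 - s0 + c10 - c11 := by
      have := ubnd (1 + c10 - c11) (abs_le.mpr ⟨by linarith, by linarith⟩)
        (abs_le.mpr ⟨by linarith, by linarith⟩) (abs_le.mpr ⟨by linarith, by linarith⟩)
      linarith
    have qt4 : 0 ≤ 1 - s0 - c10 + c11 := by
      have := ubnd (1 - c10 + c11) (abs_le.mpr ⟨by linarith, by linarith⟩)
        (abs_le.mpr ⟨by linarith, by linarith⟩) (abs_le.mpr ⟨by linarith, by linarith⟩)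
      linarith
    obtain ⟨T1, hT1def⟩ : ∃ T : Bool → Bool → Bool → ℝ, T = tauF a0 b0 b1 c00 c01 s0 (uF a0 b0 b1 c00 c01 s0) := ⟨_, rfl⟩
    obtain ⟨T2, hT2def⟩ : ∃ T : Bool → Bool → Bool → ℝ, T = tauF a1 b0 b1 c10 c11 s0 (uF a1 b0 b1 c10 c11 s0) := ⟨_, rfl⟩
    have hT1nn : ∀ x z w : Bool, 0 ≤ T1 x z w := by
      rw [hT1def]
      exact tauF_nonneg a0 b0 b1 c00 c01 s0 qs1 qs2 qs3 qs4 qb1 qb2 qb3 qb4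
        p001 p002 p003 p004 p011 p012 p013 p014
    have hT2nn : ∀ x z w : Bool, 0 ≤ T2 x z w := by
      rw [hT2def]
      exact tauF_nonneg a1 b0 b1 c10 c11 s0 qt1 qt2 qt3 qt4 qb1 qb2 qb3 qb4
        p101 p102 p103 p104 p111 p112 p113 p114
    have hsame : ∀ z w, T1 true z w + T1 false z w = T2 true z w + T2 false z w := by
      intro z w; rw [hT1def, hT2def, tauF_sum_a, tauF_sum_a]
    have hT1m0 : ∀ x z, T1 x z true + T1 x z false = μ 0 0 (x, z) := by
      intro x z; rw [hT1def, tauF_sum_b2]; linear_combination (h00 x z) / -4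
    have hT1m1 : ∀ x w, T1 x true w + T1 x false w = μ 0 1 (x, w) := by
      intro x w; rw [hT1def, tauF_sum_b1]; linear_combination (h01 x w) / -4
    have hT2m0 : ∀ x z, T2 x z true + T2 x z false = μ 1 0 (x, z) := by
      intro x z; rw [hT2def, tauF_sum_b2]; linear_combination (h10 x z) / -4
    have hT2m1 : ∀ x w, T2 x true w + T2 x false w = μ 1 1 (x, w) := by
      intro x w; rw [hT2def, tauF_sum_b1]; linear_combination (h11 x w) / -4
    clear p001 p002 p003 p004 p011 p012 p013 p014 p101 p102 p103 p104 p111 p112 p113 p114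
    clear ch1 ch2 ch3 ch4 ch5 ch6 ch7 ch8 qb1 qb2 qb3 qb4 qs1 qs2 qs3 qs4 qt1 qt2 qt3 qt4
    clear lb1 lb2 lb3 ubnd habs1 habs1' habs2 habs2' habs3 habs3'
    clear h00 h01 h10 h11 hA0t hA0f hA1t hA1f hB0t hB0f hB1t hB1f hd01 hd10 hd11 hA hB hd hpos hC
    have gy : ∀ x z w, glue T1 T2 x true z w + glue T1 T2 x false z w = T1 x z w :=
      glue_sum_y T1 T2 hT1nn hsame
    have gx : ∀ y z w, glue T1 T2 true y z w + glue T1 T2 false y z w = T2 y z w :=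
      glue_sum_x T1 T2 hT2nn hsame
    refine ⟨fun v => glue T1 T2 (v.1 0) (v.1 1) (v.2 0) (v.2 1),
      ⟨fun v => glue_nonneg T1 T2 hT1nn hT2nn _ _ _ _, ?_⟩, ?_⟩
    · rw [Fintype.sum_prod_type]
      simp only [sum_pi_bool]
      simp only [Matrix.cons_val_zero, Matrix.cons_val_one, Matrix.head_cons]
      linarith [gy true true true, gy true true false, gy true false true, gy true false false,
        gy false true true, gy false true false, gy false false true, gy false false false,
        hT1m0 true true, hT1m0 true false, hT1m0 false true, hT1m0 false false]
    · intro i j a b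
      rw [Finset.sum_filter, Fintype.sum_prod_type]
      simp only [sum_pi_bool]
      fin_cases i <;> fin_cases j <;> cases a <;> cases b <;>
        simp only [Matrix.cons_val_zero, Matrix.cons_val_one, Matrix.head_cons] <;>
        norm_num <;>
        linarith [gy true true true, gy true true false, gy true false true, gy true false false,
          gy false true true, gy false true false, gy false false true, gy false false false,
          gx true true true, gx true true false, gx true false true, gx true false false,
          gx false true true, gx false true false, gx false false true, gx false false false,
          hT1m0 true true, hT1m0 true false, hT1m0 false true, hT1m0 false false,
          hT1m1 true true, hT1m1 true false, hT1m1 false true, hT1m1 false false,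
          hT2m0 true true, hT2m0 true false, hT2m0 false true, hT2m0 false false,
          hT2m1 true true, hT2m1 true false, hT2m1 false true, hT2m1 false false]
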